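/- Let G₂(x,t) = x⁴ + 6(t² + 1)x² + 5t⁴ + 18t² − 3, H₂(x,t) = x⁴ + 2(t² − 3)x² + (t² + 5)(t² − 3), and D₂(x,t) = x⁶ + 3(t² + 1)x⁴ + 3(t² − 3)²x² + t⁶ + 27t⁴ + 99t² + 9, and let ψ₂(x,t) = (1 − 12·(G₂(x,t) + i·t·H₂(x,t))/D₂(x,t))·exp(it/2). Then D₂(x,t) > 0 for all real x, t, and the squared modulus satisfies the identity |ψ₂(x,t)|² = 1 + 4·∂²/∂x² [ln D₂(x,t)] for all (x,t) ∈ ℝ². -/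

import Mathlib

/-- Partial derivative in the first (space) variable. -/
noncomputable def dX (f : ℝ → ℝ → ℝ) : ℝ → ℝ → ℝ := fun x t => deriv (fun x' => f x' t) x

/-- `G₂(x,t) = x⁴ + 6(t²+1)x² + 5t⁴ + 18t² − 3`. -/
noncomputable def G2 (x t : ℝ) : ℝ :=
  x ^ 4 + 6 * (t ^ 2 + 1) * x ^ 2 + 5 * t ^ 4 + 18 * t ^ 2 - 3

/-- `H₂(x,t) = x⁴ + 2(t²−3)x² + (t²+5)(t²−3)`. -/
noncomputable def H2 (x t : ℝ) : ℝ :=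
  x ^ 4 + 2 * (t ^ 2 - 3) * x ^ 2 + (t ^ 2 + 5) * (t ^ 2 - 3)

/-- `D₂(x,t) = x⁶ + 3(t²+1)x⁴ + 3(t²−3)²x² + t⁶ + 27t⁴ + 99t² + 9`. -/
noncomputable def D2 (x t : ℝ) : ℝ :=
  x ^ 6 + 3 * (t ^ 2 + 1) * x ^ 4 + 3 * (t ^ 2 - 3) ^ 2 * x ^ 2
    + t ^ 6 + 27 * t ^ 4 + 99 * t ^ 2 + 9

/-- The second rational solution `ψ₂` of the focusing NLS equation. -/
noncomputable def psi2 (x t : ℝ) : ℂ :=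
  (1 - 12 * (((G2 x t : ℝ) : ℂ) + Complex.I * (t : ℂ) * ((H2 x t : ℝ) : ℂ))
      / ((D2 x t : ℝ) : ℂ)) * Complex.exp (Complex.I * (t : ℂ) / 2)

lemma D2_pos (x t : ℝ) : 0 < D2 x t := by
  unfold D2; positivity

lemma hasDerivAt_D2 (t x : ℝ) :
    HasDerivAt (fun x' : ℝ => D2 x' t)
      (6 * x ^ 5 + 12 * (t ^ 2 + 1) * x ^ 3 + 6 * (t ^ 2 - 3) ^ 2 * x) x := by
  have heq : (fun x' : ℝ => D2 x' t)
      = fun x' : ℝ => x' ^ 6 + 3 * (t ^ 2 + 1) * x' ^ 4 + 3 * (t ^ 2 - 3) ^ 2 * x' ^ 2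
        + (t ^ 6 + 27 * t ^ 4 + 99 * t ^ 2 + 9) := by
    funext x'; unfold D2; ring
  rw [heq]
  have h6 := hasDerivAt_pow 6 x
  have h4 := (hasDerivAt_pow 4 x).const_mul (3 * (t ^ 2 + 1))
  have h2 := (hasDerivAt_pow 2 x).const_mul (3 * (t ^ 2 - 3) ^ 2)
  have := ((h6.add h4).add h2).add_const (t ^ 6 + 27 * t ^ 4 + 99 * t ^ 2 + 9)
  refine this.congr_deriv ?_
  push_cast
  ring

lemma hasDerivAt_D2' (t x : ℝ) :
    HasDerivAt (fun x' : ℝ => 6 * x' ^ 5 + 12 * (t ^ 2 + 1) * x' ^ 3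
        + 6 * (t ^ 2 - 3) ^ 2 * x')
      (30 * x ^ 4 + 36 * (t ^ 2 + 1) * x ^ 2 + 6 * (t ^ 2 - 3) ^ 2) x := by
  have h5 := (hasDerivAt_pow 5 x).const_mul (6 : ℝ)
  have h3 := (hasDerivAt_pow 3 x).const_mul (12 * (t ^ 2 + 1))
  have h1 := (hasDerivAt_id x).const_mul (6 * (t ^ 2 - 3) ^ 2)
  have := (h5.add h3).add h1
  refine this.congr_deriv ?_
  push_cast
  ring

lemma dX_log_D2 (x t : ℝ) :
    dX (fun x' t' => Real.log (D2 x' t')) x t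
      = (6 * x ^ 5 + 12 * (t ^ 2 + 1) * x ^ 3 + 6 * (t ^ 2 - 3) ^ 2 * x) / D2 x t := by
  unfold dX
  exact ((hasDerivAt_D2 t x).log (D2_pos x t).ne').deriv

lemma dX_dX_log_D2 (x t : ℝ) :
    dX (dX (fun x' t' => Real.log (D2 x' t'))) x t
      = ((30 * x ^ 4 + 36 * (t ^ 2 + 1) * x ^ 2 + 6 * (t ^ 2 - 3) ^ 2) * D2 x t
          - (6 * x ^ 5 + 12 * (t ^ 2 + 1) * x ^ 3 + 6 * (t ^ 2 - 3) ^ 2 * x)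
            * (6 * x ^ 5 + 12 * (t ^ 2 + 1) * x ^ 3 + 6 * (t ^ 2 - 3) ^ 2 * x))
        / (D2 x t) ^ 2 := by
  show deriv (fun x' => dX (fun x'' t'' => Real.log (D2 x'' t'')) x' t) x = _
  have heq : (fun x' => dX (fun x'' t'' => Real.log (D2 x'' t'')) x' t)
      = fun x' => (6 * x' ^ 5 + 12 * (t ^ 2 + 1) * x' ^ 3 + 6 * (t ^ 2 - 3) ^ 2 * x')
          / D2 x' t := by
    funext x'; exact dX_log_D2 x' t
  rw [heq]
  exact ((hasDerivAt_D2' t x).div (hasDerivAt_D2 t x) (D2_pos x t).ne').deriv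

theorem psi2_modulus_identity :
    (∀ x t : ℝ, 0 < D2 x t) ∧
    (∀ x t : ℝ,
      (‖psi2 x t‖) ^ 2
        = 1 + 4 * dX (dX (fun x' t' => Real.log (D2 x' t'))) x t) := by
  refine ⟨D2_pos, fun x t => ?_⟩
  have hD := D2_pos x t
  have hDne : (D2 x t : ℂ) ≠ 0 := by exact_mod_cast hD.ne'
  have hw : psi2 x t
      = ((((D2 x t - 12 * G2 x t) / D2 x t : ℝ)) + ((-(12 * t * H2 x t) / D2 x t : ℝ)) * Complex.I)
          * Complex.exp (Complex.I * (t : ℂ) / 2) := by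
    unfold psi2
    push_cast
    field_simp
    ring
  rw [hw, norm_mul, Complex.norm_exp]
  have hre : (Complex.I * (t : ℂ) / 2).re = 0 := by simp
  rw [hre, Real.exp_zero, mul_one, Complex.sq_norm, Complex.normSq_add_mul_I,
    dX_dX_log_D2]
  have hD2 : D2 x t = x ^ 6 + 3 * (t ^ 2 + 1) * x ^ 4 + 3 * (t ^ 2 - 3) ^ 2 * x ^ 2
      + t ^ 6 + 27 * t ^ 4 + 99 * t ^ 2 + 9 := rfl
  have hG : G2 x t = x ^ 4 + 6 * (t ^ 2 + 1) * x ^ 2 + 5 * t ^ 4 + 18 * t ^ 2 - 3 := rfl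
  have hH : H2 x t = x ^ 4 + 2 * (t ^ 2 - 3) * x ^ 2 + (t ^ 2 + 5) * (t ^ 2 - 3) := rfl
  field_simp
  rw [hD2, hG, hH]
  ring
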